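/- For a fractional Brownian motion B with Hurst index H ∈ (0,1) and covariance R(u,v) = (1/2)(u^{2H}+v^{2H}−|u−v|^{2H}), the double integral ∫∫_{[0,1]²} du dv / sqrt(R(u,u)R(v,v) − R(u,v)²) is finite. -/

import Mathlib

open MeasureTheory Filter Set ProbabilityTheory

noncomputable section

/-- The covariance function of fractional Brownian motion of Hurst index `H`. -/
def fbmCov (H u v : ℝ) : ℝ := (u ^ (2*H) + v ^ (2*H) - |v - u| ^ (2*H)) / 2

/-- `B` is a fractional Brownian motion of Hurst index `H` under `P`: a centered Gaussian
process with (a.s.) continuous paths on `[0,∞)` and covariance `fbmCov H`. -/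
def IsFBM {Ω : Type*} [MeasurableSpace Ω] (P : Measure Ω) (H : ℝ)
    (B : ℝ → Ω → ℝ) : Prop :=
  (∀ t : ℝ, Measurable (B t)) ∧
  (∀ᵐ ω ∂P, ContinuousOn (fun t => B t ω) (Ici 0)) ∧
  ∀ (m : ℕ) (t : Fin m → ℝ), (∀ i, 0 ≤ t i) → ∀ (c : Fin m → ℝ),
    P.map (fun ω => ∑ i, c i * B (t i) ω) =
      gaussianReal 0 (∑ i, ∑ j, c i * c j * fbmCov H (t i) (t j)).toNNReal

namespace FbmAux
open intervalIntegral

lemma rpow_two_mul {x : ℝ} (hx : 0 ≤ x) (H : ℝ) : x ^ (2*H) = (x ^ H)^2 := by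
  rw [mul_comm, Real.rpow_mul hx, show ((2:ℝ)) = ((2:ℕ):ℝ) by norm_num, Real.rpow_natCast]

lemma bern {H : ℝ} (hH : H ∈ Set.Ioo (0:ℝ) 1) {m M : ℝ} (hm : 0 ≤ m) (hmM : m ≤ M) :
    (m + M) ^ H ≤ H * m ^ H + M ^ H := by
  obtain ⟨h0, h1⟩ := hH
  rcases eq_or_lt_of_le (hm.trans hmM) with hM0 | hM0
  · have hm0 : m = 0 := le_antisymm (hmM.trans hM0.symm.le) hm
    simp [hm0, ← hM0, Real.zero_rpow h0.ne']
  rcases eq_or_lt_of_le hm with hm0 | hm0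
  · simp [← hm0, Real.zero_rpow h0.ne']
  have key : (m + M) ^ H ≤ M ^ H * (1 + H * (m / M)) := by
    have hMM : m + M = M * (1 + m / M) := by field_simp; ring
    rw [hMM, Real.mul_rpow hM0.le (by positivity)]
    have hdiv : (0:ℝ) ≤ m / M := by positivity
    have := _root_.rpow_one_add_le_one_add_mul_self (s := m / M)
      (by linarith) h0.le h1.le
    exact mul_le_mul_of_nonneg_left this (by positivity)
  have key3 : m * M ^ H ≤ m ^ H * M := by
    calc m * M ^ H = m ^ H * m ^ (1 - H) * M ^ H := by
          rw [← Real.rpow_add hm0]; norm_num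
      _ ≤ m ^ H * M ^ (1 - H) * M ^ H := by
          have := Real.rpow_le_rpow hm hmM (by linarith : (0:ℝ) ≤ 1 - H)
          exact mul_le_mul_of_nonneg_right
            (mul_le_mul_of_nonneg_left this (by positivity)) (by positivity)
      _ = m ^ H * M := by rw [mul_assoc, ← Real.rpow_add hM0]; norm_num
  have key2 : M ^ H * (1 + H * (m / M)) = M ^ H + H * (m * M ^ H / M) := by ring
  rw [key2] at key
  have : m * M ^ H / M ≤ m ^ H := by
    rw [div_le_iff₀ hM0]; exact key3
  nlinarith [Real.rpow_nonneg hM0.le H]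

lemma covD_lower {H : ℝ} (hH : H ∈ Set.Ioo (0:ℝ) 1) {u v : ℝ} (hu : 0 ≤ u)
    (huv : u ≤ v) :
    (1-H)/4 * ((u^H)^2 * ((v-u)^H)^2) ≤
      fbmCov H u u * fbmCov H v v - (fbmCov H u v)^2 := by
  obtain ⟨h0, h1⟩ := hH
  have hv : 0 ≤ v := hu.trans huv
  have hvu : 0 ≤ v - u := by linarith
  set a := u ^ H with ha_def
  set b := v ^ H with hb_def
  set c := (v-u) ^ H with hc_def
  have ha : 0 ≤ a := Real.rpow_nonneg hu H
  have hb : 0 ≤ b := Real.rpow_nonneg hv H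
  have hc : 0 ≤ c := Real.rpow_nonneg hvu H
  have hab : a ≤ b := Real.rpow_le_rpow hu huv h0.le
  have hcb : c ≤ b := Real.rpow_le_rpow hvu (by linarith) h0.le
  have h2H : (2*H) ≠ 0 := by positivity
  have e1 : fbmCov H u u = a^2 := by
    simp only [fbmCov, sub_self, abs_zero, Real.zero_rpow h2H, rpow_two_mul hu]
    ring
  have e2 : fbmCov H v v = b^2 := by
    simp only [fbmCov, sub_self, abs_zero, Real.zero_rpow h2H, rpow_two_mul hv]
    ring
  have e3 : fbmCov H u v = (a^2 + b^2 - c^2)/2 := by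
    rw [fbmCov, abs_of_nonneg hvu, rpow_two_mul hu, rpow_two_mul hv, rpow_two_mul hvu]
  rw [e1, e2, e3]
  have ringid : a^2*b^2 - ((a^2+b^2-c^2)/2)^2
      = ((c+b-a)*(c+a-b)*(a+b-c)*(a+b+c))/4 := by ring
  rcases le_total u (v-u) with hcase | hcase
  · -- u ≤ v - u : min is u
    have hbern : b ≤ H * a + c := by
      have := bern ⟨h0, h1⟩ hu hcase
      rwa [show u + (v-u) = v by ring] at this
    have f1 : c ≤ c + b - a := by linarith
    have f2 : (1-H)*a ≤ c + a - b := by nlinarith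
    have f3 : a ≤ a + b - c := by linarith
    have f4 : c ≤ a + b + c := by linarith
    have hf2n : (0:ℝ) ≤ (1-H)*a := mul_nonneg (by linarith) ha
    have hA : 0 ≤ c + b - a := hc.trans f1
    have hB : 0 ≤ c + a - b := hf2n.trans f2
    have hC : 0 ≤ a + b - c := ha.trans f3
    have p1 : c * ((1-H)*a) ≤ (c+b-a)*(c+a-b) :=
      mul_le_mul f1 f2 hf2n hA
    have p2 : (c * ((1-H)*a)) * a ≤ ((c+b-a)*(c+a-b)) * (a+b-c) :=
      mul_le_mul p1 f3 ha (mul_nonneg hA hB)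
    have p3 : ((c * ((1-H)*a)) * a) * c ≤ (((c+b-a)*(c+a-b)) * (a+b-c)) * (a+b+c) :=
      mul_le_mul p2 f4 hc (mul_nonneg (mul_nonneg hA hB) hC)
    have lhseq : (1-H)/4 * (a^2*c^2) = (((c * ((1-H)*a)) * a) * c)/4 := by ring
    have rhseq : (((c+b-a)*(c+a-b)) * (a+b-c)) * (a+b+c)
        = (c+b-a)*(c+a-b)*(a+b-c)*(a+b+c) := by ring
    rw [rhseq] at p3
    linarith
  · -- v - u ≤ u : min is v - u
    have hbern : b ≤ H * c + a := by
      have := bern ⟨h0, h1⟩ hvu hcase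
      rwa [show (v-u) + u = v by ring] at this
    have f1 : c ≤ c + b - a := by linarith
    have f2 : (1-H)*c ≤ c + a - b := by nlinarith
    have f3 : a ≤ a + b - c := by linarith
    have f4 : a ≤ a + b + c := by linarith
    have hf2n : (0:ℝ) ≤ (1-H)*c := mul_nonneg (by linarith) hc
    have hA : 0 ≤ c + b - a := hc.trans f1
    have hB : 0 ≤ c + a - b := hf2n.trans f2
    have hC : 0 ≤ a + b - c := ha.trans f3
    have p1 : c * ((1-H)*c) ≤ (c+b-a)*(c+a-b) :=
      mul_le_mul f1 f2 hf2n hA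
    have p2 : (c * ((1-H)*c)) * a ≤ ((c+b-a)*(c+a-b)) * (a+b-c) :=
      mul_le_mul p1 f3 ha (mul_nonneg hA hB)
    have p3 : ((c * ((1-H)*c)) * a) * a ≤ (((c+b-a)*(c+a-b)) * (a+b-c)) * (a+b+c) :=
      mul_le_mul p2 f4 ha (mul_nonneg (mul_nonneg hA hB) hC)
    have lhseq : (1-H)/4 * (a^2*c^2) = (((c * ((1-H)*c)) * a) * a)/4 := by ring
    have rhseq : (((c+b-a)*(c+a-b)) * (a+b-c)) * (a+b+c)
        = (c+b-a)*(c+a-b)*(a+b-c)*(a+b+c) := by ring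
    rw [rhseq] at p3
    linarith

lemma one_side {H : ℝ} (hH : H ∈ Set.Ioo (0:ℝ) 1) {u v : ℝ} (hu : 0 ≤ u) (huv : u ≤ v) :
    1 / Real.sqrt (fbmCov H u u * fbmCov H v v - fbmCov H u v ^ 2)
      ≤ 2 / Real.sqrt (1-H) * (u ^ (-H) * (v-u) ^ (-H)) := by
  obtain ⟨h0, h1⟩ := hH
  have h2H : (2*H) ≠ 0 := by positivity
  rcases eq_or_lt_of_le hu with hu0 | hu0
  · -- u = 0
    subst hu0
    have e0 : fbmCov H 0 0 = 0 := by
      simp [fbmCov, Real.zero_rpow h2H]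
    have e1 : fbmCov H 0 v = 0 := by
      simp [fbmCov, Real.zero_rpow h2H, abs_of_nonneg huv]
    rw [e0, e1]
    simp [Real.zero_rpow (show (-H) ≠ 0 by simpa using h0.ne')]
  rcases eq_or_lt_of_le huv with huv0 | huv0
  · -- u = v
    subst huv0
    have : fbmCov H u u * fbmCov H u u - fbmCov H u u ^ 2 = 0 := by ring
    rw [this]
    simp [Real.zero_rpow (show (-H) ≠ 0 by simpa using h0.ne')]
  · have hD := covD_lower ⟨h0, h1⟩ hu huv
    have hvu : 0 < v - u := by linarith
    have ha : 0 < u ^ H := Real.rpow_pos_of_pos hu0 H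
    have hc : 0 < (v-u) ^ H := Real.rpow_pos_of_pos hvu H
    have h1H : 0 < 1 - H := by linarith
    have hlow : (0:ℝ) < (1-H)/4 * ((u^H)^2 * ((v-u)^H)^2) := by positivity
    have hsq : Real.sqrt ((1-H)/4 * ((u^H)^2 * ((v-u)^H)^2))
        = Real.sqrt (1-H) / 2 * (u^H * (v-u)^H) := by
      rw [show (1-H)/4 * ((u^H)^2 * ((v-u)^H)^2)
          = (1-H) * ((1/2) * (u^H * (v-u)^H))^2 by ring,
        Real.sqrt_mul h1H.le, Real.sqrt_sq (by positivity)]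
      ring
    have hmono : Real.sqrt (1-H) / 2 * (u^H * (v-u)^H)
        ≤ Real.sqrt (fbmCov H u u * fbmCov H v v - fbmCov H u v ^ 2) := by
      rw [← hsq]; exact Real.sqrt_le_sqrt hD
    have hpos : 0 < Real.sqrt (1-H) / 2 * (u^H * (v-u)^H) := by positivity
    calc 1 / Real.sqrt (fbmCov H u u * fbmCov H v v - fbmCov H u v ^ 2)
        ≤ 1 / (Real.sqrt (1-H) / 2 * (u^H * (v-u)^H)) :=
          one_div_le_one_div_of_le hpos hmono
      _ = 2 / Real.sqrt (1-H) * (u ^ (-H) * (v-u) ^ (-H)) := by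
          rw [Real.rpow_neg hu0.le, Real.rpow_neg hvu.le]
          have hs : (0:ℝ) < Real.sqrt (1-H) := Real.sqrt_pos.mpr h1H
          field_simp

lemma part1 {H : ℝ} (hH : H ∈ Set.Ioo (0:ℝ) 1) {u : ℝ} (hu0 : 0 ≤ u) :
    IntervalIntegrable (fun v => |v - u| ^ (-H)) volume 0 u := by
  obtain ⟨h0, h1⟩ := hH
  have hr : (-1:ℝ) < -H := by linarith
  have base : IntervalIntegrable (fun x : ℝ => x ^ (-H)) volume u 0 :=
    intervalIntegrable_rpow' hr
  have comp := base.comp_sub_left u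
  rw [sub_self, sub_zero] at comp
  rw [intervalIntegrable_iff, uIoc_of_le hu0] at comp ⊢
  refine comp.congr_fun (fun v hv => ?_) measurableSet_Ioc
  rw [abs_sub_comm, abs_of_nonneg (by linarith [hv.2] : (0:ℝ) ≤ u - v)]

lemma part2 {H : ℝ} (hH : H ∈ Set.Ioo (0:ℝ) 1) {u : ℝ} (hu1 : u ≤ 1) :
    IntervalIntegrable (fun v => |v - u| ^ (-H)) volume u 1 := by
  obtain ⟨h0, h1⟩ := hH
  have hr : (-1:ℝ) < -H := by linarith
  have base : IntervalIntegrable (fun x : ℝ => x ^ (-H)) volume 0 (1 - u) :=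
    intervalIntegrable_rpow' hr
  have comp := base.comp_sub_right u
  rw [zero_add, sub_add_cancel] at comp
  rw [intervalIntegrable_iff, uIoc_of_le hu1] at comp ⊢
  refine comp.congr_fun (fun v hv => ?_) measurableSet_Ioc
  rw [abs_of_nonneg (by linarith [hv.1] : (0:ℝ) ≤ v - u)]

lemma abs_rpow_int {H : ℝ} (hH : H ∈ Set.Ioo (0:ℝ) 1) {u : ℝ} (hu : u ∈ Icc (0:ℝ) 1) :
    IntegrableOn (fun v => |v - u| ^ (-H)) (Icc (0:ℝ) 1) volume := by
  have := (part1 hH hu.1).trans (part2 hH hu.2)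
  rwa [intervalIntegrable_iff_integrableOn_Icc_of_le zero_le_one] at this

lemma abs_rpow_integral_le {H : ℝ} (hH : H ∈ Set.Ioo (0:ℝ) 1) {u : ℝ}
    (hu : u ∈ Icc (0:ℝ) 1) :
    ∫ v in Icc (0:ℝ) 1, |v - u| ^ (-H) ≤ 2 / (1 - H) := by
  obtain ⟨h0, h1⟩ := hH
  obtain ⟨hu0, hu1⟩ := hu
  have hr : (-1:ℝ) < -H := by linarith
  have h1H : (0:ℝ) < 1 - H := by linarith
  rw [MeasureTheory.integral_Icc_eq_integral_Ioc,
    ← intervalIntegral.integral_of_le zero_le_one,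
    ← intervalIntegral.integral_add_adjacent_intervals (part1 ⟨h0,h1⟩ hu0) (part2 ⟨h0,h1⟩ hu1)]
  have e1 : ∫ v in (0:ℝ)..u, |v - u| ^ (-H) = u ^ (-H+1) / (-H+1) := by
    rw [intervalIntegral.integral_congr (g := fun v => (u - v) ^ (-H))
        (fun v hv => by
          rw [uIcc_of_le hu0] at hv
          rw [abs_sub_comm, abs_of_nonneg (by linarith [hv.2] : (0:ℝ) ≤ u - v)]),
      intervalIntegral.integral_comp_sub_left (fun x : ℝ => x ^ (-H)) u,
      sub_self, sub_zero, integral_rpow (Or.inl hr),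
      Real.zero_rpow (by linarith : -H + 1 ≠ 0), sub_zero]
  have e2 : ∫ v in u..(1:ℝ), |v - u| ^ (-H) = (1-u) ^ (-H+1) / (-H+1) := by
    rw [intervalIntegral.integral_congr (g := fun v => (v - u) ^ (-H))
        (fun v hv => by
          rw [uIcc_of_le hu1] at hv
          rw [abs_of_nonneg (by linarith [hv.1] : (0:ℝ) ≤ v - u)]),
      intervalIntegral.integral_comp_sub_right (fun x : ℝ => x ^ (-H)) u,
      sub_self, integral_rpow (Or.inl hr),
      Real.zero_rpow (by linarith : -H + 1 ≠ 0), sub_zero]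
  have b1 : u ^ (-H+1) ≤ 1 := Real.rpow_le_one hu0 hu1 (by linarith)
  have b2 : (1-u) ^ (-H+1) ≤ 1 := Real.rpow_le_one (by linarith) (by linarith) (by linarith)
  have hden : (0:ℝ) < -H + 1 := by linarith
  rw [e1, e2]
  rw [← add_div, div_le_iff₀ hden]
  have : 2 / (1 - H) * (-H + 1) = 2 := by field_simp; ring
  rw [this]
  linarith

lemma g1_int {H : ℝ} (hH : H ∈ Set.Ioo (0:ℝ) 1) :
    Integrable (fun p : ℝ × ℝ => p.1 ^ (-H) * |p.2 - p.1| ^ (-H))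
      ((volume.restrict (Icc (0:ℝ) 1)).prod (volume.restrict (Icc (0:ℝ) 1))) := by
  obtain ⟨h0, h1⟩ := hH
  set μ := volume.restrict (Icc (0:ℝ) 1) with hμ
  have hmeas : AEStronglyMeasurable (fun p : ℝ × ℝ => p.1 ^ (-H) * |p.2 - p.1| ^ (-H))
      (μ.prod μ) := by
    apply Measurable.aestronglyMeasurable
    measurability
  rw [integrable_prod_iff hmeas]
  constructor
  · filter_upwards [ae_restrict_mem measurableSet_Icc] with u hu
    exact (abs_rpow_int ⟨h0, h1⟩ hu).const_mul _
  · apply Integrable.mono' (g := fun u : ℝ => u ^ (-H) * (2 / (1 - H)))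
    · apply Integrable.mul_const
      have : IntervalIntegrable (fun x : ℝ => x ^ (-H)) volume 0 1 :=
        intervalIntegrable_rpow' (by linarith)
      rwa [intervalIntegrable_iff_integrableOn_Icc_of_le zero_le_one] at this
    · exact hmeas.norm.integral_prod_right'
    · filter_upwards [ae_restrict_mem measurableSet_Icc] with u hu
      have hu0 : (0:ℝ) ≤ u := hu.1
      have hnn : ∀ v : ℝ, 0 ≤ u ^ (-H) * |v - u| ^ (-H) := fun v =>
        mul_nonneg (Real.rpow_nonneg hu0 _) (Real.rpow_nonneg (abs_nonneg _) _)
      rw [Real.norm_of_nonneg (integral_nonneg fun v => norm_nonneg _)]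
      have hcong : ∫ v, ‖u ^ (-H) * |v - u| ^ (-H)‖ ∂μ
          = ∫ v, u ^ (-H) * |v - u| ^ (-H) ∂μ := by
        congr 1; funext v; exact Real.norm_of_nonneg (hnn v)
      rw [hcong, MeasureTheory.integral_const_mul]
      exact mul_le_mul_of_nonneg_left (abs_rpow_integral_le ⟨h0, h1⟩ hu)
        (Real.rpow_nonneg hu0 _)

lemma fbmCov_symm (H u v : ℝ) : fbmCov H u v = fbmCov H v u := by
  simp [fbmCov, abs_sub_comm]; ring

end FbmAux

open FbmAux

theorem fbm_cov_integral_finite (H : ℝ) (hH : H ∈ Ioo (0:ℝ) 1) :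
    IntegrableOn
      (fun p : ℝ × ℝ =>
        1 / Real.sqrt (fbmCov H p.1 p.1 * fbmCov H p.2 p.2 - (fbmCov H p.1 p.2)^2))
      (Icc (0:ℝ) 1 ×ˢ Icc (0:ℝ) 1) volume := by
  obtain ⟨h0, h1⟩ := hH
  set μ := volume.restrict (Icc (0:ℝ) 1) with hμ
  have hKnn : (0:ℝ) ≤ 2 / Real.sqrt (1-H) := by positivity
  -- the dominating function
  have hg2 : Integrable (fun p : ℝ × ℝ => p.2 ^ (-H) * |p.2 - p.1| ^ (-H)) (μ.prod μ) := by
    have : (fun p : ℝ × ℝ => p.2 ^ (-H) * |p.2 - p.1| ^ (-H))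
        = (fun p : ℝ × ℝ => p.1 ^ (-H) * |p.2 - p.1| ^ (-H)) ∘ Prod.swap := by
      funext p; simp [Function.comp, abs_sub_comm]
    rw [this]
    exact (g1_int ⟨h0, h1⟩).swap
  have hG : Integrable (fun p : ℝ × ℝ =>
      2 / Real.sqrt (1-H) * ((p.1 ^ (-H) + p.2 ^ (-H)) * |p.2 - p.1| ^ (-H)))
      (μ.prod μ) := by
    have : (fun p : ℝ × ℝ =>
        2 / Real.sqrt (1-H) * ((p.1 ^ (-H) + p.2 ^ (-H)) * |p.2 - p.1| ^ (-H)))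
        = fun p : ℝ × ℝ => 2 / Real.sqrt (1-H) *
            (p.1 ^ (-H) * |p.2 - p.1| ^ (-H) + p.2 ^ (-H) * |p.2 - p.1| ^ (-H)) := by
      funext p; ring
    rw [this]
    exact ((g1_int ⟨h0, h1⟩).add hg2).const_mul _
  have mcov : ∀ (g h : ℝ × ℝ → ℝ), Measurable g → Measurable h →
      Measurable fun p : ℝ × ℝ => fbmCov H (g p) (h p) := by
    intro g h hg hh
    unfold fbmCov
    exact (((hg.pow measurable_const).add (hh.pow measurable_const)).sub
      (((hh.sub hg).abs).pow measurable_const)).div_const 2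
  rw [IntegrableOn, Measure.volume_eq_prod, ← Measure.prod_restrict]
  apply Integrable.mono' hG
  · apply Measurable.aestronglyMeasurable
    have : Measurable fun p : ℝ × ℝ =>
        fbmCov H p.1 p.1 * fbmCov H p.2 p.2 - (fbmCov H p.1 p.2)^2 :=
      ((mcov _ _ measurable_fst measurable_fst).mul
        (mcov _ _ measurable_snd measurable_snd)).sub
        ((mcov _ _ measurable_fst measurable_snd).pow measurable_const)
    exact measurable_const.div ((Real.continuous_sqrt.measurable.comp this))
  · rw [Measure.prod_restrict]
    filter_upwards [ae_restrict_mem (measurableSet_Icc.prod measurableSet_Icc)] with p hp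
    obtain ⟨hp1, hp2⟩ := hp
    have hfnn : (0:ℝ) ≤ 1 / Real.sqrt (fbmCov H p.1 p.1 * fbmCov H p.2 p.2
        - (fbmCov H p.1 p.2)^2) := by positivity
    rw [Real.norm_of_nonneg hfnn]
    rcases le_total p.1 p.2 with hle | hle
    · calc 1 / Real.sqrt (fbmCov H p.1 p.1 * fbmCov H p.2 p.2 - (fbmCov H p.1 p.2)^2)
          ≤ 2 / Real.sqrt (1-H) * (p.1 ^ (-H) * (p.2 - p.1) ^ (-H)) :=
            one_side ⟨h0, h1⟩ hp1.1 hle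
        _ ≤ 2 / Real.sqrt (1-H) * ((p.1 ^ (-H) + p.2 ^ (-H)) * |p.2 - p.1| ^ (-H)) := by
            rw [abs_of_nonneg (by linarith : (0:ℝ) ≤ p.2 - p.1)]
            apply mul_le_mul_of_nonneg_left _ hKnn
            have h2 : (0:ℝ) ≤ p.2 ^ (-H) * (p.2 - p.1) ^ (-H) :=
              mul_nonneg (Real.rpow_nonneg hp2.1 _) (Real.rpow_nonneg (by linarith) _)
            nlinarith
    · have hsymm : fbmCov H p.1 p.1 * fbmCov H p.2 p.2 - (fbmCov H p.1 p.2)^2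
          = fbmCov H p.2 p.2 * fbmCov H p.1 p.1 - (fbmCov H p.2 p.1)^2 := by
        rw [mul_comm, fbmCov_symm H p.1 p.2]
      rw [hsymm]
      calc 1 / Real.sqrt (fbmCov H p.2 p.2 * fbmCov H p.1 p.1 - (fbmCov H p.2 p.1)^2)
          ≤ 2 / Real.sqrt (1-H) * (p.2 ^ (-H) * (p.1 - p.2) ^ (-H)) :=
            one_side ⟨h0, h1⟩ hp2.1 hle
        _ ≤ 2 / Real.sqrt (1-H) * ((p.1 ^ (-H) + p.2 ^ (-H)) * |p.2 - p.1| ^ (-H)) := by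
            rw [abs_sub_comm, abs_of_nonneg (by linarith : (0:ℝ) ≤ p.1 - p.2)]
            apply mul_le_mul_of_nonneg_left _ hKnn
            have h2 : (0:ℝ) ≤ p.1 ^ (-H) * (p.1 - p.2) ^ (-H) :=
              mul_nonneg (Real.rpow_nonneg hp1.1 _) (Real.rpow_nonneg (by linarith) _)
            nlinarith
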